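/- (Combined prediction-step bound for Algorithm 1) Let x⁻_{k+1} = x_k − δ·(|∇_t f(x_k,t_k)|/‖∇_x f(x_k,t_k)‖²)·∇_x f(x_k,t_k) if ‖∇_x f(x_k,t_k)‖ ≥ ε and x⁻_{k+1} = x_k otherwise. Then |f(x⁻_{k+1}, t_k + δ) − f(x_k, t_k)| ≤ max(γδ², μδ), where γ = 2K1/δ + (M/(2ε²))K1² + K3/2 + K1K2/ε and μ = K1 + (δ/2)K3. -/

import Mathlib

open RealInnerProductSpace

/-- Mean value bound: a function with derivative bounded by `C` on `[0,∞)` moves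
at most `C*δ` between `t` and `t+δ`. -/
theorem lip_t_aux {F : Type*} [NormedAddCommGroup F] [NormedSpace ℝ F]
    (u : ℝ → F) (u' : ℝ → F) (C t δ : ℝ)
    (hu : ∀ s, 0 ≤ s → HasDerivAt u (u' s) s) (hC : ∀ s, 0 ≤ s → ‖u' s‖ ≤ C)
    (ht : 0 ≤ t) (hδ : 0 ≤ δ) : ‖u (t + δ) - u t‖ ≤ C * δ := by
  have h := Convex.norm_image_sub_le_of_norm_hasDerivWithin_le
    (f := u) (f' := u') (s := Set.Icc t (t + δ)) (C := C)
    (fun x hx => (hu x (ht.trans hx.1)).hasDerivWithinAt)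
    (fun x hx => hC x (ht.trans hx.1)) (convex_Icc _ _)
    (Set.left_mem_Icc.2 (by linarith)) (Set.right_mem_Icc.2 (by linarith))
  simpa [abs_of_nonneg hδ] using h

/-- Descent lemma: a function with `M`-Lipschitz gradient satisfies
`|φ y − φ x − ⟪∇φ x, y − x⟫| ≤ (M/2)‖y − x‖²`. -/
theorem descent_aux {E : Type*} [NormedAddCommGroup E] [InnerProductSpace ℝ E] [CompleteSpace E]
    (φ : E → ℝ) (g : E → E) (M : ℝ) (hM : 0 ≤ M)
    (hg : ∀ x, HasGradientAt φ (g x) x)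
    (hL : ∀ x y, ‖g x - g y‖ ≤ M * ‖x - y‖) (x y : E) :
    |φ y - φ x - ⟪g x, y - x⟫| ≤ M / 2 * ‖y - x‖ ^ 2 := by
  set d := y - x with hd
  have hline : ∀ s : ℝ, HasDerivAt (fun s : ℝ => x + s • d) d s := by
    intro s
    simpa using ((hasDerivAt_id s).smul_const d).const_add x
  have hψ : ∀ s : ℝ, HasDerivAt (fun s : ℝ => φ (x + s • d)) ⟪g (x + s • d), d⟫ s := by
    intro s
    have := ((hg (x + s • d)).hasFDerivAt).comp_hasDerivAt s (hline s)
    simp at this; exact this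
  have hgc : Continuous g :=
    (LipschitzWith.of_dist_le_mul (K := Real.toNNReal M) (by
      intro a b
      simpa [dist_eq_norm, Real.coe_toNNReal M hM] using hL a b)).continuous
  have hcont : Continuous fun s : ℝ => (⟪g (x + s • d), d⟫ : ℝ) :=
    (hgc.comp (by continuity)).inner continuous_const
  have hFTC : φ y - φ x = ∫ s in (0:ℝ)..1, ⟪g (x + s • d), d⟫ := by
    have h := intervalIntegral.integral_eq_sub_of_hasDerivAt
      (fun s _ => hψ s) (hcont.intervalIntegrable 0 1)
    have hy : x + (1:ℝ) • d = y := by simp [hd]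
    have hx : x + (0:ℝ) • d = x := by simp
    rw [hy, hx] at h
    exact h.symm
  have hconst : (⟪g x, d⟫ : ℝ) = ∫ s in (0:ℝ)..1, ⟪g x, d⟫ := by simp
  have key : φ y - φ x - ⟪g x, d⟫ = ∫ s in (0:ℝ)..1, ⟪g (x + s • d) - g x, d⟫ := by
    rw [hFTC, hconst, ← intervalIntegral.integral_sub (hcont.intervalIntegrable 0 1)
      (intervalIntegrable_const)]
    congr 1; ext s; rw [inner_sub_left]
  rw [key]
  have hbound : ∀ s ∈ Set.Icc (0:ℝ) 1, ‖(⟪g (x + s • d) - g x, d⟫ : ℝ)‖ ≤ (M * ‖d‖^2) * s := by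
    intro s hs
    calc ‖(⟪g (x + s • d) - g x, d⟫ : ℝ)‖ ≤ ‖g (x + s • d) - g x‖ * ‖d‖ :=
          norm_inner_le_norm _ _
      _ ≤ (M * ‖(x + s • d) - x‖) * ‖d‖ :=
          mul_le_mul_of_nonneg_right (hL (x + s • d) x) (norm_nonneg _)
      _ = (M * ‖d‖^2) * s := by
          simp [norm_smul, abs_of_nonneg hs.1]
          ring
  have hInt := intervalIntegral.norm_integral_le_abs_of_norm_le (μ := MeasureTheory.volume)
    (g := fun s => (M * ‖d‖^2) * s)
    (by
      filter_upwards [MeasureTheory.ae_restrict_mem measurableSet_uIoc] with s hs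
      refine hbound s ⟨?_, ?_⟩
      · have := hs.1; simp at this; linarith
      · have := hs.2; simpa using this)
    ((continuous_const.mul continuous_id).intervalIntegrable 0 1)
  rw [← Real.norm_eq_abs]
  calc ‖∫ s in (0:ℝ)..1, (⟪g (x + s • d) - g x, d⟫ : ℝ)‖
      ≤ |∫ s in (0:ℝ)..1, (M * ‖d‖^2) * s| := hInt
    _ = ∫ s in (0:ℝ)..1, (M * ‖d‖^2) * s := by
        rw [abs_of_nonneg]
        apply intervalIntegral.integral_nonneg (by norm_num)
        intro u hu
        have : 0 ≤ M * ‖d‖^2 := by positivity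
        exact mul_nonneg this hu.1
    _ = M / 2 * ‖d‖ ^ 2 := by
        rw [intervalIntegral.integral_const_mul]
        simp [integral_id]
        ring

/-- combined prediction-step bound for Algorithm 1:
with the prediction `x⁻ = x_k − δ(|∇_t f|/‖∇_x f‖²)∇_x f` if `‖∇_x f‖ ≥ ε`
and `x⁻ = x_k` otherwise, `|f(x⁻, t_k + δ) − f(x_k, t_k)| ≤ max(γδ², μδ)` with
`γ = 2K1/δ + (M/(2ε²))K1² + K3/2 + K1K2/ε` and `μ = K1 + (δ/2)K3`. -/
theorem prediction_step_bound_combined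
    {E : Type*} [NormedAddCommGroup E] [InnerProductSpace ℝ E] [CompleteSpace E]
    (f : E → ℝ → ℝ) (gx : E → ℝ → E) (ft : E → ℝ → ℝ)
    (fxt : E → ℝ → E) (ftt : E → ℝ → ℝ)
    (m M K1 K2 K3 : ℝ) (hm : 0 < m) (hmM : m ≤ M)
    (hgrad : ∀ (x : E) (t : ℝ), 0 ≤ t → HasGradientAt (fun y => f y t) (gx x t) x)
    (hft : ∀ (x : E) (t : ℝ), 0 ≤ t → HasDerivAt (fun s => f x s) (ft x t) t)
    (hfxt : ∀ (x : E) (t : ℝ), 0 ≤ t → HasDerivAt (fun s => gx x s) (fxt x t) t)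
    (hftt : ∀ (x : E) (t : ℝ), 0 ≤ t → HasDerivAt (fun s => ft x s) (ftt x t) t)
    (hsc : ∀ (t : ℝ), 0 ≤ t → ∀ x y : E, m * ‖x - y‖ ^ 2 ≤ ⟪gx x t - gx y t, x - y⟫)
    (hLip : ∀ (t : ℝ), 0 ≤ t → ∀ x y : E, ‖gx x t - gx y t‖ ≤ M * ‖x - y‖)
    (hK1 : ∀ (x : E) (t : ℝ), 0 ≤ t → |ft x t| ≤ K1)
    (hK2 : ∀ (x : E) (t : ℝ), 0 ≤ t → ‖fxt x t‖ ≤ K2)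
    (hK3 : ∀ (x : E) (t : ℝ), 0 ≤ t → |ftt x t| ≤ K3)
    (xk : E) (tk δ ε : ℝ) (htk : 0 ≤ tk) (hδ : 0 < δ) (hε : 0 < ε)
    (xminus : E)
    (hxminus : xminus =
      if ε ≤ ‖gx xk tk‖ then
        xk - (δ * |ft xk tk| / ‖gx xk tk‖ ^ 2) • gx xk tk
      else xk) :
    |f xminus (tk + δ) - f xk tk| ≤
      max ((2 * K1 / δ + M / (2 * ε ^ 2) * K1 ^ 2 + K3 / 2 + K1 * K2 / ε) * δ ^ 2)
        ((K1 + δ / 2 * K3) * δ) := by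
  have hK1nn : 0 ≤ K1 := (abs_nonneg _).trans (hK1 xk tk htk)
  have hK2nn : 0 ≤ K2 := (norm_nonneg _).trans (hK2 xk tk htk)
  have hK3nn : 0 ≤ K3 := (abs_nonneg _).trans (hK3 xk tk htk)
  have hMnn : 0 ≤ M := le_trans hm.le hmM
  have htk2 : 0 ≤ tk + δ := by linarith
  -- Lipschitz in time of f at any fixed x
  have hf_t : ∀ x : E, |f x (tk + δ) - f x tk| ≤ K1 * δ := by
    intro x
    have := lip_t_aux (fun s => f x s) (fun s => ft x s) K1 tk δ
      (fun s hs => hft x s hs) (fun s hs => by simpa [Real.norm_eq_abs] using hK1 x s hs)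
      htk hδ.le
    simpa [Real.norm_eq_abs] using this
  -- Lipschitz in time of gx at xk
  have hg_t : ‖gx xk (tk + δ) - gx xk tk‖ ≤ K2 * δ :=
    lip_t_aux (fun s => gx xk s) (fun s => fxt xk s) K2 tk δ
      (fun s hs => hfxt xk s hs) (fun s hs => hK2 xk s hs) htk hδ.le
  by_cases hcase : ε ≤ ‖gx xk tk‖
  · -- prediction step taken
    rw [hxminus, if_pos hcase] at *
    set g := gx xk tk with hg
    set a := |ft xk tk| with ha
    set G := ‖gx xk tk‖ with hG
    have hGpos : 0 < G := lt_of_lt_of_le hε hcase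
    have hann : 0 ≤ a := abs_nonneg _
    have haK1 : a ≤ K1 := hK1 xk tk htk
    set s : ℝ := δ * a / G ^ 2 with hs
    set x' : E := xk - s • g with hx'
    have hsnn : 0 ≤ s := by positivity
    have hdiff : x' - xk = -(s • g) := by rw [hx']; abel
    have hnd : ‖x' - xk‖ = δ * a / G := by
      rw [hdiff, norm_neg, norm_smul, Real.norm_eq_abs, abs_of_nonneg hsnn, hs, ← hG]
      field_simp
    have hndle : ‖x' - xk‖ ≤ δ * K1 / ε := by
      rw [hnd]
      apply div_le_div₀ (by positivity) (by nlinarith) hε hcase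
    have hndnn : 0 ≤ ‖x' - xk‖ := norm_nonneg _
    -- descent lemma at time tk + δ
    have hdesc := descent_aux (fun y => f y (tk + δ)) (fun y => gx y (tk + δ)) M hMnn
      (fun x => hgrad x (tk + δ) htk2) (fun x y => hLip (tk + δ) htk2 x y) xk x'
    -- inner product decomposition
    have hinner1 : (⟪g, x' - xk⟫ : ℝ) = -(δ * a) := by
      rw [hdiff, inner_neg_right, real_inner_smul_right, real_inner_self_eq_norm_sq, ← hG, hs]
      field_simp
    have hinner_split : (⟪gx xk (tk + δ), x' - xk⟫ : ℝ)
        = ⟪g, x' - xk⟫ + ⟪gx xk (tk + δ) - g, x' - xk⟫ := by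
      rw [inner_sub_left]; ring
    have hinner2 : |(⟪gx xk (tk + δ) - g, x' - xk⟫ : ℝ)| ≤ (K2 * δ) * (δ * K1 / ε) := by
      calc |(⟪gx xk (tk + δ) - g, x' - xk⟫ : ℝ)|
          ≤ ‖gx xk (tk + δ) - g‖ * ‖x' - xk‖ := abs_real_inner_le_norm _ _
        _ ≤ (K2 * δ) * (δ * K1 / ε) := by
            apply mul_le_mul hg_t hndle hndnn (by positivity)
    have hsq : ‖x' - xk‖ ^ 2 ≤ (δ * K1 / ε) ^ 2 := by
      apply pow_le_pow_left₀ hndnn hndle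
    -- assemble
    have hchain : |f x' (tk + δ) - f xk tk|
        ≤ M / 2 * (δ * K1 / ε) ^ 2 + δ * K1 + (K2 * δ) * (δ * K1 / ε) + K1 * δ := by
      have e1 : f x' (tk + δ) - f xk tk
          = (f x' (tk + δ) - f xk (tk + δ) - ⟪gx xk (tk + δ), x' - xk⟫)
            + ⟪g, x' - xk⟫ + ⟪gx xk (tk + δ) - g, x' - xk⟫
            + (f xk (tk + δ) - f xk tk) := by
        rw [hinner_split]; ring
      rw [e1]
      have h1 : |f x' (tk + δ) - f xk (tk + δ) - ⟪gx xk (tk + δ), x' - xk⟫|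
          ≤ M / 2 * (δ * K1 / ε) ^ 2 := by
        refine hdesc.trans ?_
        apply mul_le_mul_of_nonneg_left hsq (by positivity)
      have h2 : |(⟪g, x' - xk⟫ : ℝ)| ≤ δ * K1 := by
        rw [hinner1, abs_neg, abs_of_nonneg (by positivity)]
        nlinarith
      have h4 := hf_t xk
      calc |_ + _ + _ + _| ≤ |_ + _ + _| + |f xk (tk + δ) - f xk tk| := abs_add_le _ _
        _ ≤ (|_ + _| + |(⟪gx xk (tk + δ) - g, x' - xk⟫ : ℝ)|)
            + |f xk (tk + δ) - f xk tk| := by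
            gcongr
            exact abs_add_le _ _
        _ ≤ ((|f x' (tk + δ) - f xk (tk + δ) - ⟪gx xk (tk + δ), x' - xk⟫|
              + |(⟪g, x' - xk⟫ : ℝ)|) + |(⟪gx xk (tk + δ) - g, x' - xk⟫ : ℝ)|)
            + |f xk (tk + δ) - f xk tk| := by
            gcongr
            exact abs_add_le _ _
        _ ≤ M / 2 * (δ * K1 / ε) ^ 2 + δ * K1 + (K2 * δ) * (δ * K1 / ε) + K1 * δ := by
            have := h1; have := h2; have := hinner2; linarith
    refine le_max_of_le_left (hchain.trans ?_)
    have e2 : M / 2 * (δ * K1 / ε) ^ 2 = M / (2 * ε ^ 2) * K1 ^ 2 * δ ^ 2 := by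
      field_simp
    have e3 : (K2 * δ) * (δ * K1 / ε) = K1 * K2 / ε * δ ^ 2 := by
      field_simp
    have e4 : δ * K1 + K1 * δ = 2 * K1 / δ * δ ^ 2 := by
      field_simp; ring
    have e5 : 0 ≤ K3 / 2 * δ ^ 2 := by positivity
    have hRHS : (2 * K1 / δ + M / (2 * ε ^ 2) * K1 ^ 2 + K3 / 2 + K1 * K2 / ε) * δ ^ 2
        = 2 * K1 / δ * δ ^ 2 + M / (2 * ε ^ 2) * K1 ^ 2 * δ ^ 2 + K3 / 2 * δ ^ 2
          + K1 * K2 / ε * δ ^ 2 := by ring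
    rw [hRHS]
    linarith [e2, e3, e4, e5]
  · -- no prediction step
    rw [hxminus, if_neg hcase]
    refine le_max_of_le_right ((hf_t xk).trans ?_)
    have h : (K1 + δ / 2 * K3) * δ = K1 * δ + δ / 2 * K3 * δ := by ring
    rw [h]
    linarith [show (0:ℝ) ≤ δ / 2 * K3 * δ by positivity]
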